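/- Let A, B ⊆ F^n be linear codes with trivial hulls. Then B = A·X for a permutation matrix X if and only if Σ_B = Xᵀ·Σ_A·X, where Σ_A and Σ_B are the projection matrices Gᵀ(G·Gᵀ)⁻¹G built from generator matrices of A and B respectively. -/

import Mathlib

open Matrix

/-- The orthogonal complement (dual code) of a linear code `U ⊆ F^n` with respect to the
standard bilinear form `⟨x, y⟩ = ∑ i, x i * y i`. -/
def dualCode {F : Type*} [Field F] {n : ℕ} (U : Submodule F (Fin n → F)) :
    Submodule F (Fin n → F) where
  carrier := {z | ∀ u ∈ U, ∑ i, u i * z i = 0}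
  add_mem' := by
    intro a b ha hb u hu
    have h1 := ha u hu
    have h2 := hb u hu
    simp only [Set.mem_setOf_eq] at *
    calc ∑ i, u i * (a + b) i = (∑ i, u i * a i) + ∑ i, u i * b i := by
          rw [← Finset.sum_add_distrib]
          exact Finset.sum_congr rfl fun i _ => by simp [mul_add]
      _ = 0 := by rw [h1, h2, add_zero]
  zero_mem' := by
    intro u hu
    simp
  smul_mem' := by
    intro c a ha u hu
    have h := ha u hu
    simp only [Set.mem_setOf_eq] at *
    calc ∑ i, u i * (c • a) i = c * ∑ i, u i * a i := by
          rw [Finset.mul_sum]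
          exact Finset.sum_congr rfl fun i _ => by simp [smul_eq_mul]; ring
      _ = 0 := by rw [h, mul_zero]

section Aux

variable {F : Type*} [Field F]

theorem aux_range_vecMulLinear {m n : ℕ} (M : Matrix (Fin m) (Fin n) F) :
    LinearMap.range M.vecMulLinear = Submodule.span F (Set.range M) :=
  range_vecMulLinear M

/-- If a code has trivial hull, the Gram matrix of a generator matrix is invertible. -/
theorem aux_gram_isUnit {n k : ℕ} {U : Submodule F (Fin n → F)}
    (G : Matrix (Fin k) (Fin n) F) (hind : LinearIndependent F G)
    (hspan : Submodule.span F (Set.range G) = U)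
    (hhull : U ⊓ dualCode U = ⊥) : IsUnit (G * Gᵀ) := by
  have key : ∀ c : Fin k → F, c ᵥ* (G * Gᵀ) = 0 → c = 0 := by
    intro c hc
    have hv : (c ᵥ* G) ∈ U := by
      rw [← hspan, ← aux_range_vecMulLinear]
      exact ⟨c, rfl⟩
    have hv2 : (c ᵥ* G) ∈ dualCode U := by
      intro u hu
      rw [← hspan] at hu
      induction hu using Submodule.span_induction with
      | mem x hx =>
          obtain ⟨i, rfl⟩ := hx
          have h0 := congr_fun hc i
          simp only [Matrix.vecMul, dotProduct, Matrix.mul_apply,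
            Matrix.transpose_apply, Pi.zero_apply] at h0 ⊢
          have hs : ∑ j, G i j * ∑ l, c l * G l j = ∑ l, c l * ∑ j, G l j * G i j := by
            simp_rw [Finset.mul_sum]
            rw [Finset.sum_comm]
            exact Finset.sum_congr rfl fun l _ => Finset.sum_congr rfl fun j _ => by ring
          rw [hs, h0]
      | zero => simp
      | add x y _ _ hx hy => simp [add_mul, Finset.sum_add_distrib, hx, hy]
      | smul a x _ hx =>
          simp only [Pi.smul_apply, smul_eq_mul, mul_assoc, ← Finset.mul_sum, hx, mul_zero]
    have hz : (c ᵥ* G) = 0 := by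
      have := hhull ▸ Submodule.mem_inf.mpr ⟨hv, hv2⟩
      simpa using this
    exact Matrix.vecMul_injective_iff.mpr hind (by simpa using hz)
  rw [← Matrix.vecMul_injective_iff_isUnit]
  intro c d h
  simp only at h
  have : (c - d) ᵥ* (G * Gᵀ) = 0 := by rw [Matrix.sub_vecMul, h, sub_self]
  exact sub_eq_zero.mp (key _ this)

/-- The row space of a product. -/
theorem aux_rowspace_mul {a b c : ℕ} (M : Matrix (Fin a) (Fin b) F)
    (N : Matrix (Fin b) (Fin c) F) :
    Submodule.span F (Set.range (M * N)) =
      Submodule.map N.vecMulLinear (Submodule.span F (Set.range M)) := by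
  rw [← aux_range_vecMulLinear, ← aux_range_vecMulLinear, ← LinearMap.range_comp]
  congr 1
  apply LinearMap.ext; intro v
  simp [Matrix.vecMul_vecMul]

theorem aux_rowspace_mul_le {a b c : ℕ} (M : Matrix (Fin a) (Fin b) F)
    (N : Matrix (Fin b) (Fin c) F) :
    Submodule.span F (Set.range (M * N)) ≤ Submodule.span F (Set.range N) := by
  rw [aux_rowspace_mul, ← aux_range_vecMulLinear N]
  exact LinearMap.map_le_range (f := N.vecMulLinear)

theorem aux_rowspace_unit_mul {b c : ℕ} (U : Matrix (Fin b) (Fin b) F) (hU : IsUnit U)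
    (N : Matrix (Fin b) (Fin c) F) :
    Submodule.span F (Set.range (U * N)) = Submodule.span F (Set.range N) := by
  rw [aux_rowspace_mul]
  have h : Submodule.span F (Set.range U) = ⊤ := by
    rw [← aux_range_vecMulLinear, LinearMap.range_eq_top]
    exact Matrix.vecMul_surjective_iff_isUnit.mpr hU
  rw [h, Submodule.map_top, aux_range_vecMulLinear]

/-- The row space of `Σ = Gᵀ (G Gᵀ)⁻¹ G` equals the row space of `G`. -/
theorem aux_rowspace_sigma {n k : ℕ} (G : Matrix (Fin k) (Fin n) F)
    (hG : IsUnit (G * Gᵀ)) :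
    Submodule.span F (Set.range (Gᵀ * (G * Gᵀ)⁻¹ * G)) = Submodule.span F (Set.range G) := by
  have hdet := (Matrix.isUnit_iff_isUnit_det _).mp hG
  apply le_antisymm (aux_rowspace_mul_le _ _)
  have hGS : G * (Gᵀ * (G * Gᵀ)⁻¹ * G) = G := by
    rw [← Matrix.mul_assoc, ← Matrix.mul_assoc, Matrix.mul_nonsing_inv _ hdet, Matrix.one_mul]
  conv_lhs => rw [← hGS]
  exact aux_rowspace_mul_le _ _

/-- `Σ` does not depend on the choice of the generator matrix. -/
theorem aux_sigma_unique {n k : ℕ} (G G' : Matrix (Fin k) (Fin n) F)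
    (hind' : LinearIndependent F G')
    (hspan : Submodule.span F (Set.range G) = Submodule.span F (Set.range G'))
    (hG : IsUnit (G * Gᵀ)) :
    G'ᵀ * (G' * G'ᵀ)⁻¹ * G' = Gᵀ * (G * Gᵀ)⁻¹ * G := by
  have hmem : ∀ i, G' i ∈ Submodule.span F (Set.range G) := by
    intro i; rw [hspan]; exact Submodule.subset_span ⟨i, rfl⟩
  choose M hM using fun i => (Submodule.mem_span_range_iff_exists_fun F).mp (hmem i)
  have hMG : G' = Matrix.of M * G := by
    ext i j
    rw [← hM i]
    simp [Matrix.mul_apply, Finset.sum_apply]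
  subst hMG
  set Mm := Matrix.of M with hMm
  have hMunit : IsUnit Mm := by
    rw [← Matrix.vecMul_injective_iff_isUnit]
    intro c d h
    simp only at h
    have h2 : c ᵥ* (Mm * G) = d ᵥ* (Mm * G) := by
      rw [← Matrix.vecMul_vecMul, ← Matrix.vecMul_vecMul, h]
    exact Matrix.vecMul_injective_iff.mpr hind' h2
  have hMdet : IsUnit Mm.det := (Matrix.isUnit_iff_isUnit_det _).mp hMunit
  have hMTdet : IsUnit Mmᵀ.det := by rwa [Matrix.det_transpose]
  have e1 : (Mm * G) * (Mm * G)ᵀ = Mm * (G * Gᵀ) * Mmᵀ := by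
    rw [Matrix.transpose_mul]
    simp [Matrix.mul_assoc]
  rw [e1, Matrix.transpose_mul]
  rw [Matrix.mul_inv_rev, Matrix.mul_inv_rev]
  simp only [Matrix.mul_assoc]
  rw [Matrix.mul_nonsing_inv_cancel_left _ _ hMTdet,
    Matrix.nonsing_inv_mul_cancel_left _ _ hMdet]

end Aux

/-- Let `A, B ⊆ F^n` be linear codes with trivial hulls, with generator
matrices `G_A, G_B`, and let `X` be a permutation matrix. Then `B = A·X` if and only if
`Σ_B = Xᵀ Σ_A X`, where `Σ_U = G_Uᵀ (G_U G_Uᵀ)⁻¹ G_U`. -/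
theorem statement10 {F : Type*} [Field F] {n k : ℕ}
    (A B : Submodule F (Fin n → F))
    (GA GB : Matrix (Fin k) (Fin n) F)
    (hAind : LinearIndependent F GA)
    (hAspan : Submodule.span F (Set.range GA) = A)
    (hBind : LinearIndependent F GB)
    (hBspan : Submodule.span F (Set.range GB) = B)
    (hAhull : A ⊓ dualCode A = ⊥)
    (hBhull : B ⊓ dualCode B = ⊥)
    (σ : Equiv.Perm (Fin n)) :
    B = Submodule.map (Matrix.vecMulLinear (σ.permMatrix F)) A ↔
      GBᵀ * (GB * GBᵀ)⁻¹ * GB =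
        (σ.permMatrix F)ᵀ * (GAᵀ * (GA * GAᵀ)⁻¹ * GA) * σ.permMatrix F := by
  set X := σ.permMatrix F with hX
  have hXXT : X * Xᵀ = 1 := by
    ext i j
    simp [hX, Equiv.Perm.permMatrix, PEquiv.toMatrix, Equiv.toPEquiv, Matrix.mul_apply,
      Matrix.one_apply, Finset.sum_ite_eq, eq_comm]
  have hXTX : Xᵀ * X = 1 := mul_eq_one_comm.mp hXXT
  have hdet1 : X.det * Xᵀ.det = 1 := by rw [← Matrix.det_mul, hXXT, Matrix.det_one]
  have hXunit : IsUnit X :=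
    (Matrix.isUnit_iff_isUnit_det _).mpr (IsUnit.of_mul_eq_one _ hdet1)
  have hXTunit : IsUnit Xᵀ :=
    (Matrix.isUnit_iff_isUnit_det _).mpr (IsUnit.of_mul_eq_one _ (by rwa [mul_comm] at hdet1))
  have hAunit : IsUnit (GA * GAᵀ) := aux_gram_isUnit GA hAind hAspan hAhull
  have hBunit : IsUnit (GB * GBᵀ) := aux_gram_isUnit GB hBind hBspan hBhull
  have e1 : (GA * X) * (GA * X)ᵀ = GA * GAᵀ := by
    rw [Matrix.transpose_mul, Matrix.mul_assoc, ← Matrix.mul_assoc X Xᵀ GAᵀ, hXXT,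
      Matrix.one_mul]
  constructor
  · intro hB
    have hind2 : LinearIndependent F (GA * X) := by
      apply Matrix.vecMul_injective_iff.mp
      intro c d h
      simp only at h
      rw [← Matrix.vecMul_vecMul, ← Matrix.vecMul_vecMul] at h
      have h2 := Matrix.vecMul_injective_iff_isUnit.mpr hXunit h
      exact Matrix.vecMul_injective_iff.mpr hAind h2
    have hspan2 : Submodule.span F (Set.range (GA * X)) =
        Submodule.span F (Set.range GB) := by
      rw [aux_rowspace_mul, hAspan, ← hB, hBspan]
    have hG2unit : IsUnit ((GA * X) * (GA * X)ᵀ) := by rw [e1]; exact hAunit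
    rw [aux_sigma_unique (GA * X) GB hBind hspan2 hG2unit]
    rw [e1, Matrix.transpose_mul]
    simp only [Matrix.mul_assoc]
  · intro h
    rw [← hBspan, ← aux_rowspace_sigma GB hBunit, h, Matrix.mul_assoc,
      aux_rowspace_unit_mul Xᵀ hXTunit, aux_rowspace_mul,
      aux_rowspace_sigma GA hAunit, hAspan]
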